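/- Any directed edge operator yields an undirected edge operator: let V be a complex matrix on ℂᵈ⊗ℂᵈ and V' = S·V·S its swapped version. Assume the directed consistency conditions: (D2) V·V' = V'·V; and on three qudits, (D3a) (V⊗I)·(I⊗V) = (I⊗V)·(V⊗I), (D3b) (V⊗I)·(I⊗V') = (I⊗V')·(V⊗I), and (D3c) (V'⊗I)·(I⊗V) = (I⊗V)·(V'⊗I). Then U := V·V' satisfies the undirected consistency conditions: U commutes with the swap S (C2), and (U⊗I)·(I⊗U) = (I⊗U)·(U⊗I) (C3). -/

import Mathlib

open Matrix Kronecker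

/-- The swap operator on two qudits. -/
def swapOpD (d : ℕ) : Matrix (Fin d × Fin d) (Fin d × Fin d) ℂ :=
  fun p q => if p.1 = q.2 ∧ p.2 = q.1 then 1 else 0

/-- `W ⊗ I` acting on qudits 1,2 of three qudits (reindexed to match `I ⊗ W`). -/
def opOn12 (d : ℕ) (W : Matrix (Fin d × Fin d) (Fin d × Fin d) ℂ) :
    Matrix (Fin d × Fin d × Fin d) (Fin d × Fin d × Fin d) ℂ :=
  Matrix.reindex (Equiv.prodAssoc (Fin d) (Fin d) (Fin d))
    (Equiv.prodAssoc (Fin d) (Fin d) (Fin d)) (W ⊗ₖ (1 : Matrix (Fin d) (Fin d) ℂ))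

/-- `I ⊗ W` acting on qudits 2,3 of three qudits. -/
def opOn23 (d : ℕ) (W : Matrix (Fin d × Fin d) (Fin d × Fin d) ℂ) :
    Matrix (Fin d × Fin d × Fin d) (Fin d × Fin d × Fin d) ℂ :=
  (1 : Matrix (Fin d) (Fin d) ℂ) ⊗ₖ W

lemma swapOpD_eq (d : ℕ) :
    swapOpD d = (Equiv.prodComm (Fin d) (Fin d)).toPEquiv.toMatrix := by
  ext ⟨i,j⟩ ⟨k,l⟩
  simp [swapOpD, PEquiv.toMatrix_apply, Equiv.toPEquiv, Prod.ext_iff, and_comm, eq_comm]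

lemma swap_conj (d : ℕ) (W : Matrix (Fin d × Fin d) (Fin d × Fin d) ℂ) :
    swapOpD d * W * swapOpD d = W.submatrix Prod.swap Prod.swap := by
  rw [swapOpD_eq, PEquiv.toMatrix_toPEquiv_mul, PEquiv.mul_toMatrix_toPEquiv]
  ext p q
  simp [Matrix.submatrix_apply, Equiv.prodComm]

lemma opOn12_mul (d : ℕ) (A B : Matrix (Fin d × Fin d) (Fin d × Fin d) ℂ) :
    opOn12 d (A * B) = opOn12 d A * opOn12 d B := by
  simp only [opOn12, Matrix.reindex_apply, Matrix.submatrix_mul_equiv,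
    ← Matrix.mul_kronecker_mul, Matrix.mul_one]

lemma opOn23_mul (d : ℕ) (A B : Matrix (Fin d × Fin d) (Fin d × Fin d) ℂ) :
    opOn23 d (A * B) = opOn23 d A * opOn23 d B := by
  simp [opOn23, ← Matrix.mul_kronecker_mul]

def revE (d : ℕ) : (Fin d × Fin d × Fin d) ≃ (Fin d × Fin d × Fin d) where
  toFun p := (p.2.2, p.2.1, p.1)
  invFun p := (p.2.2, p.2.1, p.1)
  left_inv := fun ⟨a,b,c⟩ => rfl
  right_inv := fun ⟨a,b,c⟩ => rfl

lemma hSS (d : ℕ) : swapOpD d * swapOpD d = 1 := by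
  rw [swapOpD_eq, PEquiv.toMatrix_toPEquiv_mul]
  ext ⟨i,j⟩ ⟨k,l⟩
  simp [Matrix.submatrix_apply, Equiv.toPEquiv, PEquiv.toMatrix_apply,
    Matrix.one_apply, Prod.ext_iff, and_comm]

lemma op12_rev (d : ℕ) (W : Matrix (Fin d × Fin d) (Fin d × Fin d) ℂ) :
    opOn12 d (swapOpD d * W * swapOpD d) = (opOn23 d W).submatrix (revE d) (revE d) := by
  rw [swap_conj]
  ext ⟨a,b,c⟩ ⟨a',b',c'⟩
  simp [opOn12, opOn23, revE, Equiv.prodAssoc, Matrix.one_apply, mul_comm]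

lemma op23_rev (d : ℕ) (W : Matrix (Fin d × Fin d) (Fin d × Fin d) ℂ) :
    opOn23 d (swapOpD d * W * swapOpD d) = (opOn12 d W).submatrix (revE d) (revE d) := by
  rw [swap_conj]
  ext ⟨a,b,c⟩ ⟨a',b',c'⟩
  simp [opOn12, opOn23, revE, Equiv.prodAssoc, Matrix.one_apply, mul_comm]

lemma comm4 {M : Type*} [Monoid M] (a b c e : M) (hbc : b*c=c*b) (hae : a*e=e*a)
    (hbe : b*e=e*b) (hac : a*c=c*a) : (a*b)*(c*e) = (c*e)*(a*b) := by
  calc (a*b)*(c*e) = a*(b*c)*e := by simp [mul_assoc]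
  _ = a*(c*b)*e := by rw [hbc]
  _ = (a*c)*(b*e) := by simp [mul_assoc]
  _ = (c*a)*(e*b) := by rw [hac, hbe]
  _ = c*(a*e)*b := by simp [mul_assoc]
  _ = c*(e*a)*b := by rw [hae]
  _ = (c*e)*(a*b) := by simp [mul_assoc]


/-- A directed edge operator satisfying D2–D3 yields an undirected edge operator
`U = V V'` satisfying C2 and C3. -/
theorem directed_gives_undirected (d : ℕ) (hd : 1 ≤ d)
    (V : Matrix (Fin d × Fin d) (Fin d × Fin d) ℂ)
    (hD2 : V * (swapOpD d * V * swapOpD d) = (swapOpD d * V * swapOpD d) * V)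
    (hD3a : opOn12 d V * opOn23 d V = opOn23 d V * opOn12 d V)
    (hD3b : opOn12 d V * opOn23 d (swapOpD d * V * swapOpD d) =
      opOn23 d (swapOpD d * V * swapOpD d) * opOn12 d V)
    (hD3c : opOn12 d (swapOpD d * V * swapOpD d) * opOn23 d V =
      opOn23 d V * opOn12 d (swapOpD d * V * swapOpD d)) :
    (V * (swapOpD d * V * swapOpD d)) * swapOpD d =
        swapOpD d * (V * (swapOpD d * V * swapOpD d)) ∧
      opOn12 d (V * (swapOpD d * V * swapOpD d)) *
          opOn23 d (V * (swapOpD d * V * swapOpD d)) =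
        opOn23 d (V * (swapOpD d * V * swapOpD d)) *
          opOn12 d (V * (swapOpD d * V * swapOpD d)) := by
  set S := swapOpD d with hSdef
  set B := S * V * S with hBdef
  have hS : S * S = 1 := hSS d
  have hBS : B * S = S * V := by
    rw [hBdef, mul_assoc, hS, mul_one]
  have hSB : S * B = V * S := by
    rw [hBdef, ← mul_assoc, ← mul_assoc, hS, one_mul]
  constructor
  · calc V * B * S = V * (S * V) := by rw [mul_assoc, hBS]
    _ = (V * S) * V := by rw [mul_assoc]
    _ = (S * B) * V := by rw [← hSB]
    _ = S * (B * V) := by rw [mul_assoc]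
    _ = S * (V * B) := by rw [← hD2]
  · have hbc : opOn12 d B * opOn23 d V = opOn23 d V * opOn12 d B := hD3c
    have hae : opOn12 d V * opOn23 d B = opOn23 d B * opOn12 d V := hD3b
    have hbe : opOn12 d B * opOn23 d B = opOn23 d B * opOn12 d B := by
      rw [hBdef, op12_rev, op23_rev, Matrix.submatrix_mul_equiv,
        Matrix.submatrix_mul_equiv, ← hD3a, hD3a]
    rw [opOn12_mul, opOn23_mul]
    exact comm4 _ _ _ _ hbc hae hbe hD3a
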